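/- Let X be a Banach space, T(t) a C₀-semigroup on a closed subspace X₀ ⊆ X generated by A₀, and A a closed operator with part A₀ in X₀ and (ϑ,∞) ⊆ ρ(A). Define, for λ > ϑ, S(t)x = λ∫_0^t T(s)(λI−A)^{-1} x ds + (I − T(t))(λI−A)^{-1} x. Then S(0) = 0 and for x ∈ X₀ the map t ↦ S(t)x is continuously differentiable with derivative d/dt S(t)x = T(t)x. -/
import Mathlib


open MeasureTheory Set

/-- For a non-densely defined operator `A` whose part `A₀` in `X₀ = closure D(A)`
generates a `C₀`-semigroup `T(t)`, with resolvent `R = (λI−A)^{-1}` for `λ > ϑ`,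
the formula `S(t)x = λ∫_0^t T(s)Rx ds + (I − T(t))Rx` defines the integrated
semigroup: `S(0) = 0` and, for `x ∈ X₀`, `t ↦ S(t)x` is continuously
differentiable on `[0,∞)` with derivative `T(t)x`. -/
theorem integrated_semigroup_formula_derivative
    {X : Type*} [NormedAddCommGroup X] [NormedSpace ℝ X] [CompleteSpace X]
    (X₀ : Set X) (hX₀closed : IsClosed X₀)
    (D : Set X) (A : X → X) (lam : ℝ)
    (T : ℝ → X →L[ℝ] X) (R : X →L[ℝ] X)
    -- T is a C₀-semigroup on X₀:
    (hT0 : ∀ x ∈ X₀, T 0 x = x)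
    (hTsg : ∀ s t : ℝ, 0 ≤ s → 0 ≤ t → ∀ x ∈ X₀, T (s + t) x = T s (T t x))
    (hTX₀ : ∀ t : ℝ, 0 ≤ t → ∀ x ∈ X₀, T t x ∈ X₀)
    (hTcont : ∀ x ∈ X₀, ContinuousOn (fun t => T t x) (Ici (0:ℝ)))
    -- R maps X into the domain D(A₀) ⊆ X₀ of the part of A in X₀:
    (hRD : ∀ x : X, R x ∈ D) (hDX₀ : D ⊆ X₀)
    -- the semigroup is differentiable along the domain, with generator A₀ = A on D:
    (hderiv : ∀ y ∈ D, ∀ t ∈ Ici (0:ℝ),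
      HasDerivWithinAt (fun s => T s y) (T t (A y)) (Ici (0:ℝ)) t)
    -- resolvent identity (λI − A₀) R x = x on X₀:
    (hres : ∀ x ∈ X₀, lam • R x - A (R x) = x)
    -- R commutes with T on X₀:
    (hcomm : ∀ t : ℝ, 0 ≤ t → ∀ x ∈ X₀, R (T t x) = T t (R x))
    -- the definition of S:
    (S : ℝ → X → X)
    (hS : ∀ t : ℝ, ∀ x : X,
      S t x = lam • (∫ s in (0:ℝ)..t, T s (R x)) + (R x - T t (R x))) :
    (∀ x : X, S 0 x = 0) ∧
      (∀ x ∈ X₀, ∀ t ∈ Ici (0:ℝ),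
        HasDerivWithinAt (fun τ => S τ x) (T t x) (Ici (0:ℝ)) t) ∧
      (∀ x ∈ X₀, ContinuousOn (fun t => T t x) (Ici (0:ℝ))) := by
  refine ⟨fun x => ?_, fun x hx t ht => ?_, hTcont⟩
  · rw [hS, intervalIntegral.integral_same, hT0 (R x) (hDX₀ (hRD x))]
    simp
  · have hRx₀ : R x ∈ X₀ := hDX₀ (hRD x)
    have hcontR : ContinuousOn (fun s => T s (R x)) (Ici (0:ℝ)) := hTcont _ hRx₀
    have ht' : (0:ℝ) ≤ t := ht
    -- derivative of the integral term
    have h1 : HasDerivWithinAt (fun τ => ∫ s in (0:ℝ)..τ, T s (R x))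
        (T t (R x)) (Ici (0:ℝ)) t := by
      have hint : ∀ u ∈ Ici (0:ℝ), IntervalIntegrable (fun s => T s (R x)) volume 0 u := by
        intro u hu
        exact (hcontR.mono (by rw [uIcc_of_le hu]; exact Icc_subset_Ici_self)).intervalIntegrable
      haveI : Fact (t ∈ Icc (0:ℝ) (t+1)) := ⟨⟨ht, by linarith⟩⟩
      have hsub : Icc (0:ℝ) (t+1) ⊆ Ici 0 := Icc_subset_Ici_self
      have hd := intervalIntegral.integral_hasDerivWithinAt_right
        (s := Icc (0:ℝ) (t+1)) (t := Icc (0:ℝ) (t+1)) (hint t ht)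
        ((hcontR.mono hsub).stronglyMeasurableAtFilter_nhdsWithin measurableSet_Icc t)
        ((hcontR.mono hsub) t ⟨ht, by linarith⟩)
      refine hd.mono_of_mem_nhdsWithin ?_
      exact mem_nhdsWithin.2 ⟨Iio (t+1), isOpen_Iio, by simp, fun y hy => ⟨hy.2, le_of_lt hy.1⟩⟩
    have h2 : HasDerivWithinAt (fun τ => T τ (R x)) (T t (A (R x))) (Ici (0:ℝ)) t :=
      hderiv (R x) (hRD x) t ht
    have h3 : HasDerivWithinAt (fun τ => S τ x)
        (lam • T t (R x) + (0 - T t (A (R x)))) (Ici (0:ℝ)) t := by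
      have := ((h1.const_smul lam).add ((hasDerivWithinAt_const t _ (R x)).sub h2))
      refine this.congr (fun τ _ => hS τ x) (hS t x)
    convert h3 using 1
    rw [zero_sub, ← (T t).map_smul, ← sub_eq_add_neg, ← (T t).map_sub, hres x hx]
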